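/- Let x = s_1 s_2 ⋯ s_k be a reduced expression in the affine Weyl group W_a of SL_n such that the alcove x·A_0 is antidominant (equivalently, the alcove walk corresponding to s_1⋯s_k is in the downwards direction at every step). Write x = t_η x_0 with η the translation part. Then for every i ∈ {1,...,k}, the coweight s_1 s_2 ⋯ s_i(ᾱ_{s_i}^∨) − η lies in the nonnegative real span of positive coroots. -/

import Mathlib

/-- Theorem A.16 / equation (A.1) of the paper.  Realize the affine Weyl group of
`SL_n` acting on `V = ℝⁿ` (root functionals `x ↦ x_a − x_b`).  The simple reflections
are the spherical reflections `σ (some j)` swapping coordinates `j, j+1` and the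
affine reflection `σ none` across `x₁ − x_n = 1`; `vtx s` is the vertex of the
dominant base alcove `A₀ = {0 < x_a − x_b < 1, a < b}` opposite the wall of `s`, and
`ᾱ_s^∨ = σ s (vtx s) − vtx s`.  Let `x = s₁ ⋯ s_k` be an expression whose alcove walk
is downwards at every step (equivalently, a reduced expression with `x·A₀`
antidominant), with partial products `P i = σ(s₁) ∘ ⋯ ∘ σ(s_i)` and translation part
`η = x(0)`.  Then for every `i`, the coweight `s₁ ⋯ s_i(ᾱ_{s_i}^∨) − η` lies in the
nonnegative span of the positive coroots `e_a − e_b` (`a < b`). -/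
theorem downward_walk_positivity (n k : ℕ) (hn : 2 ≤ n) (hk : 1 ≤ k)
    (σ : Option (Fin (n - 1)) → (Fin n → ℝ) → (Fin n → ℝ))
    (hσs : ∀ (j : Fin (n - 1)) (x : Fin n → ℝ) (i : Fin n),
      σ (some j) x i =
        if (i : ℕ) = (j : ℕ) then x ⟨(j : ℕ) + 1, by omega⟩
        else if (i : ℕ) = (j : ℕ) + 1 then x ⟨(j : ℕ), by omega⟩
        else x i)
    (hσa : ∀ (x : Fin n → ℝ) (i : Fin n),
      σ none x i = x i -
        (x ⟨0, by omega⟩ - x ⟨n - 1, by omega⟩ - 1) *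
          ((if (i : ℕ) = 0 then 1 else 0) - (if (i : ℕ) = n - 1 then 1 else 0)))
    (vtx : Option (Fin (n - 1)) → (Fin n → ℝ))
    (hvs : ∀ (j : Fin (n - 1)) (i : Fin n),
      vtx (some j) i = if (i : ℕ) ≤ (j : ℕ) then 1 else 0)
    (hva : vtx none = 0)
    (abar : Option (Fin (n - 1)) → (Fin n → ℝ))
    (habar : ∀ s, abar s = fun i => σ s (vtx s) i - vtx s i)
    (w : Fin k → Option (Fin (n - 1)))
    (P : ℕ → (Fin n → ℝ) → (Fin n → ℝ))
    (hP0 : P 0 = id)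
    (hPsucc : ∀ i : Fin k, P ((i : ℕ) + 1) = P (i : ℕ) ∘ σ (w i))
    (eta : Fin n → ℝ) (heta : eta = P k (fun _ => 0))
    (hdown : ∀ y : Fin n → ℝ,
      (∀ a b : Fin n, a < b → 0 < y a - y b ∧ y a - y b < 1) →
      ∀ i : Fin k, ∃ a b : Fin n, a < b ∧ ∃ m : ℤ,
        (m : ℝ) < P (i : ℕ) y a - P (i : ℕ) y b ∧
        ∀ jj : Fin n, P ((i : ℕ) + 1) y jj =
          P (i : ℕ) y jj -
            (P (i : ℕ) y a - P (i : ℕ) y b - m) *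
              ((if jj = a then 1 else 0) - (if jj = b then 1 else 0))) :
    ∀ i : Fin k, ∃ c : Fin n → Fin n → ℝ,
      (∀ a b : Fin n, 0 ≤ c a b) ∧
      ∀ jj : Fin n, P ((i : ℕ) + 1) (abar (w i)) jj - eta jj =
        ∑ a : Fin n, ∑ b : Fin n,
          (if a < b then c a b else 0) *
            ((if jj = a then 1 else 0) - (if jj = b then 1 else 0)) := by
  intro i
  -- affinity of σ
  have hσaff : ∀ (s : Option (Fin (n-1))) (t : ℝ) (p q : Fin n → ℝ),
      σ s (fun jj => p jj + t * (q jj - p jj)) =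
        fun jj => σ s p jj + t * (σ s q jj - σ s p jj) := by
    rintro (_|j) t p q <;> funext ii
    · simp only [hσa]; ring
    · simp only [hσs]; split_ifs <;> ring
  -- involution of σ
  have hinv : ∀ (s : Option (Fin (n-1))) (x : Fin n → ℝ), σ s (σ s x) = x := by
    rintro (_|j) x <;> funext ii
    · have h1 : (0:ℕ) ≠ n - 1 := by omega
      simp only [hσa, Fin.val_mk, if_pos rfl, if_neg h1, if_neg (Ne.symm h1), if_true]
      ring
    · have hj1 : (j:ℕ) + 1 < n := by omega
      have hj : (j:ℕ) < n := by omega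
      simp only [hσs]
      by_cases h1 : (ii:ℕ) = (j:ℕ)
      · have : ii = ⟨(j:ℕ), hj⟩ := Fin.ext h1
        subst this
        simp
      · by_cases h2 : (ii:ℕ) = (j:ℕ)+1
        · have : ii = ⟨(j:ℕ)+1, hj1⟩ := Fin.ext h2
          subst this
          simp
        · simp [h1, h2]
  -- affinity of P m for m ≤ k
  have hPaff : ∀ m : ℕ, m ≤ k → ∀ (t : ℝ) (p q r : Fin n → ℝ),
      (∀ jj, r jj = p jj + t * (q jj - p jj)) →
      ∀ jj, P m r jj = P m p jj + t * (P m q jj - P m p jj) := by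
    intro m
    induction m with
    | zero =>
      intro _ t p q r hr jj
      simp only [hP0, id]
      exact hr jj
    | succ m ih =>
      intro hm t p q r hr jj
      have hmk : m < k := by omega
      have hc := hPsucc ⟨m, hmk⟩
      simp only [Fin.val_mk] at hc
      rw [hc]
      simp only [Function.comp_apply]
      refine ih (by omega) t (σ (w ⟨m, hmk⟩) p) (σ (w ⟨m, hmk⟩) q) _ ?_ jj
      intro x
      have : r = fun jj => p jj + t * (q jj - p jj) := funext hr
      rw [this, hσaff]
  have hik : (i : ℕ) + 1 ≤ k := i.2
  -- decomposition of P (i+1) (abar (w i))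
  have hdecomp : ∀ jj : Fin n, P ((i:ℕ)+1) (abar (w i)) jj =
      P (i:ℕ) (vtx (w i)) jj - P ((i:ℕ)+1) (vtx (w i)) jj
        + P ((i:ℕ)+1) (fun _ => (0:ℝ)) jj := by
    set V := vtx (w i) with hV
    set Q := σ (w i) V with hQ
    set Z : Fin n → ℝ := fun _ => 0 with hZ
    set M : Fin n → ℝ := fun jj => Q jj + (1/2:ℝ) * (Z jj - Q jj) with hM
    have hQP : ∀ x, P ((i:ℕ)+1) Q x = P (i:ℕ) V x := by
      intro x
      rw [hPsucc i]
      simp only [Function.comp_apply, hQ, hinv]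
    have EM : ∀ x, P ((i:ℕ)+1) M x = P ((i:ℕ)+1) Q x
        + (1/2:ℝ) * (P ((i:ℕ)+1) Z x - P ((i:ℕ)+1) Q x) :=
      hPaff _ hik (1/2) Q Z M (fun jj => rfl)
    have EA : ∀ x, P ((i:ℕ)+1) (abar (w i)) x = P ((i:ℕ)+1) V x
        + 2 * (P ((i:ℕ)+1) M x - P ((i:ℕ)+1) V x) := by
      refine hPaff _ hik 2 V M _ ?_
      intro jj
      rw [habar]
      simp only [hM, hZ]
      ring
    intro jj
    rw [EA jj, EM jj, hQP jj]
    ring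
  -- key positivity lemma
  have key : ∀ (p : Fin n → ℝ), (∀ a b : Fin n, a < b → 0 ≤ p a - p b ∧ p a - p b ≤ 1) →
      ∀ (wt : Fin n → ℝ), (∀ a b : Fin n, a < b → 0 ≤ wt a - wt b) →
      ∀ i1 i2 : ℕ, i1 ≤ i2 → i2 ≤ k →
      0 ≤ ∑ jj : Fin n, wt jj * (P i1 p jj - P i2 p jj) := by
    intro p hp wt hwt i1 i2 h12 h2k
    have hsingle : ∀ (a : Fin n) (g : Fin n → ℝ),
        (∑ jj : Fin n, g jj * (if jj = a then (1:ℝ) else 0)) = g a := by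
      intro a g
      simp [mul_ite, mul_one, mul_zero]
    -- one downward step
    have step : ∀ (y : Fin n → ℝ),
        (∀ a b : Fin n, a < b → 0 < y a - y b ∧ y a - y b < 1) →
        ∀ j : Fin k, 0 ≤ ∑ jj : Fin n, wt jj * (P (j:ℕ) y jj - P ((j:ℕ)+1) y jj) := by
      intro y hy j
      obtain ⟨a, b, hab, m, hm, hf⟩ := hdown y hy j
      have hc : (0:ℝ) ≤ P (j:ℕ) y a - P (j:ℕ) y b - m := by linarith
      have e : (∑ jj : Fin n, wt jj * (P (j:ℕ) y jj - P ((j:ℕ)+1) y jj))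
          = (P (j:ℕ) y a - P (j:ℕ) y b - m) * (wt a - wt b) := by
        calc (∑ jj : Fin n, wt jj * (P (j:ℕ) y jj - P ((j:ℕ)+1) y jj))
            = ∑ jj : Fin n, ((P (j:ℕ) y a - P (j:ℕ) y b - m) * (wt jj * (if jj = a then 1 else 0))
                - (P (j:ℕ) y a - P (j:ℕ) y b - m) * (wt jj * (if jj = b then 1 else 0))) :=
              Finset.sum_congr rfl (fun jj _ => by rw [hf jj]; ring)
          _ = (P (j:ℕ) y a - P (j:ℕ) y b - m) * (∑ jj : Fin n, wt jj * (if jj = a then 1 else 0))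
                - (P (j:ℕ) y a - P (j:ℕ) y b - m) * (∑ jj : Fin n, wt jj * (if jj = b then 1 else 0)) := by
              rw [Finset.sum_sub_distrib, ← Finset.mul_sum, ← Finset.mul_sum]
          _ = (P (j:ℕ) y a - P (j:ℕ) y b - m) * (wt a - wt b) := by
              rw [hsingle, hsingle]; ring
      rw [e]
      exact mul_nonneg hc (hwt a b hab)
    -- telescoping over the open alcove
    have main : ∀ (y : Fin n → ℝ),
        (∀ a b : Fin n, a < b → 0 < y a - y b ∧ y a - y b < 1) →
        0 ≤ ∑ jj : Fin n, wt jj * (P i1 y jj - P i2 y jj) := by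
      intro y hy
      clear hp
      revert h2k
      induction i2, h12 using Nat.le_induction with
      | base => intro _; simp
      | succ i2 h12' ih =>
        intro h2k
        have hj : i2 < k := by omega
        have hstep := step y hy ⟨i2, hj⟩
        simp only [Fin.val_mk] at hstep
        have hsum : (∑ jj : Fin n, wt jj * (P i1 y jj - P (i2+1) y jj))
            = (∑ jj : Fin n, wt jj * (P i1 y jj - P i2 y jj))
              + ∑ jj : Fin n, wt jj * (P i2 y jj - P (i2+1) y jj) := by
          rw [← Finset.sum_add_distrib]
          exact Finset.sum_congr rfl (fun jj _ => by ring)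
        rw [hsum]
        have hih := ih (by omega)
        linarith
    -- base point of the open alcove
    set y0 : Fin n → ℝ := fun a => ((n:ℝ) - 1 - (a:ℕ)) / n with hy0
    have hn0 : (0:ℝ) < n := by positivity
    have hy0alc : ∀ a b : Fin n, a < b → 0 < y0 a - y0 b ∧ y0 a - y0 b < 1 := by
      intro a b hab
      have hab' : (a:ℕ) < (b:ℕ) := hab
      have hbn : (b:ℕ) < n := b.2
      have hd : y0 a - y0 b = (((b:ℕ):ℝ) - ((a:ℕ):ℝ)) / n := by
        rw [hy0]; ring
      rw [hd]
      constructor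
      · apply div_pos _ hn0
        have : ((a:ℕ):ℝ) < ((b:ℕ):ℝ) := by exact_mod_cast hab'
        linarith
      · rw [div_lt_one hn0]
        have h1 : ((b:ℕ):ℝ) < (n:ℝ) := by exact_mod_cast hbn
        have h2 : (0:ℝ) ≤ ((a:ℕ):ℝ) := by positivity
        linarith
    -- limit argument: A = value at p, B = value at y0
    set A := ∑ jj : Fin n, wt jj * (P i1 p jj - P i2 p jj) with hA
    set B := ∑ jj : Fin n, wt jj * (P i1 y0 jj - P i2 y0 jj) with hB
    have hAB : ∀ t : ℝ, 0 < t → t ≤ 1 → 0 ≤ A + t * (B - A) := by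
      intro t ht0 ht1
      set yt : Fin n → ℝ := fun jj => p jj + t * (y0 jj - p jj) with hyt
      have hytalc : ∀ a b : Fin n, a < b → 0 < yt a - yt b ∧ yt a - yt b < 1 := by
        intro a b hab
        obtain ⟨hp0, hp1⟩ := hp a b hab
        obtain ⟨hy0', hy1'⟩ := hy0alc a b hab
        have e : yt a - yt b = (1 - t) * (p a - p b) + t * (y0 a - y0 b) := by
          rw [hyt]; ring
        rw [e]
        constructor
        · nlinarith
        · nlinarith
      have e1 := hPaff i1 (le_trans h12 h2k) t p y0 yt (fun jj => rfl)
      have e2 := hPaff i2 h2k t p y0 yt (fun jj => rfl)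
      have hmain := main yt hytalc
      have e : (∑ jj : Fin n, wt jj * (P i1 yt jj - P i2 yt jj)) = A + t * (B - A) := by
        have hterm : ∀ jj : Fin n, wt jj * (P i1 yt jj - P i2 yt jj)
            = wt jj * (P i1 p jj - P i2 p jj)
              + t * (wt jj * (P i1 y0 jj - P i2 y0 jj) - wt jj * (P i1 p jj - P i2 p jj)) :=
          fun jj => by rw [e1 jj, e2 jj]; ring
        rw [Finset.sum_congr rfl (fun jj _ => hterm jj), Finset.sum_add_distrib,
          ← Finset.mul_sum, Finset.sum_sub_distrib, ← hA, ← hB]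
      rw [e] at hmain
      exact hmain
    by_contra hneg
    push_neg at hneg
    set t0 := min 1 ((-A) / (2 * (|B - A| + 1))) with ht0def
    have ht0pos : 0 < t0 :=
      lt_min one_pos (div_pos (neg_pos.mpr hneg) (by positivity))
    have h := hAB t0 ht0pos (min_le_left _ _)
    have ht0le : t0 ≤ (-A) / (2 * (|B - A| + 1)) := min_le_right _ _
    have habs : t0 * (B - A) ≤ t0 * |B - A| :=
      mul_le_mul_of_nonneg_left (le_abs_self _) ht0pos.le
    have h2 : t0 * (|B - A| + 1) ≤ -A / 2 := by
      have hpos : (0:ℝ) ≤ |B - A| + 1 := by positivity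
      calc t0 * (|B - A| + 1) ≤ (-A) / (2 * (|B - A| + 1)) * (|B - A| + 1) :=
            mul_le_mul_of_nonneg_right ht0le hpos
        _ = -A / 2 := by
            have hne : (|B - A| + 1) ≠ 0 := by positivity
            field_simp
    nlinarith [abs_nonneg (B - A)]
  -- the vector
  set v : Fin n → ℝ := fun jj => P ((i:ℕ)+1) (abar (w i)) jj - eta jj with hv
  -- prefix sums
  set PS : ℕ → ℝ := fun m => ∑ jj : Fin n, (if (jj:ℕ) < m then v jj else 0) with hPS
  have hvtxcl : ∀ a b : Fin n, a < b → 0 ≤ vtx (w i) a - vtx (w i) b ∧ vtx (w i) a - vtx (w i) b ≤ 1 := by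
    intro a b hab
    have hab' : (a:ℕ) < (b:ℕ) := hab
    cases hwi : w i with
    | none => rw [hva]; norm_num
    | some j =>
      rw [hvs, hvs]
      split_ifs with h1 h2 h2
      · norm_num
      · norm_num
      · exact absurd (by omega : (a:ℕ) ≤ (j:ℕ)) h1
      · norm_num
  have hvwt : ∀ (wt : Fin n → ℝ), (∀ a b : Fin n, a < b → 0 ≤ wt a - wt b) →
      0 ≤ ∑ jj : Fin n, wt jj * v jj := by
    intro wt hwt
    have k1 := key (vtx (w i)) hvtxcl wt hwt (i:ℕ) ((i:ℕ)+1) (by omega) hik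
    have k2 := key (fun _ => (0:ℝ)) (by intro a b _; norm_num) wt hwt ((i:ℕ)+1) k hik le_rfl
    have e : (∑ jj : Fin n, wt jj * v jj)
        = (∑ jj : Fin n, wt jj * (P (i:ℕ) (vtx (w i)) jj - P ((i:ℕ)+1) (vtx (w i)) jj))
          + ∑ jj : Fin n, wt jj * (P ((i:ℕ)+1) (fun _ => (0:ℝ)) jj - P k (fun _ => (0:ℝ)) jj) := by
      rw [← Finset.sum_add_distrib]
      refine Finset.sum_congr rfl (fun jj _ => ?_)
      rw [hv]
      dsimp only
      rw [hdecomp jj, heta]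
      ring
    rw [e]
    linarith
  have hPSnonneg : ∀ m : ℕ, 0 ≤ PS m := by
    intro m
    have hwt : ∀ a b : Fin n, a < b →
        0 ≤ (if (a:ℕ) < m then (1:ℝ) else 0) - (if (b:ℕ) < m then (1:ℝ) else 0) := by
      intro a b hab
      have hab' : (a:ℕ) < (b:ℕ) := hab
      split_ifs with h1 h2 h2 <;> norm_num
      omega
    have h := hvwt (fun jj => if (jj:ℕ) < m then (1:ℝ) else 0) hwt
    have e : (∑ jj : Fin n, (if (jj:ℕ) < m then (1:ℝ) else 0) * v jj) = PS m := by
      rw [hPS]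
      exact Finset.sum_congr rfl (fun jj _ => by rw [ite_mul, one_mul, zero_mul])
    rw [e] at h
    exact h
  have hPSn : PS n = 0 := by
    have h1 := hvwt (fun _ => (1:ℝ)) (by intro a b _; norm_num)
    have h2 := hvwt (fun _ => (-1:ℝ)) (by intro a b _; norm_num)
    have e1 : (∑ jj : Fin n, (1:ℝ) * v jj) = ∑ jj : Fin n, v jj := by
      exact Finset.sum_congr rfl (fun jj _ => one_mul _)
    have e2 : (∑ jj : Fin n, (-1:ℝ) * v jj) = -∑ jj : Fin n, v jj := by
      rw [← Finset.sum_neg_distrib]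
      exact Finset.sum_congr rfl (fun jj _ => by ring)
    rw [e1] at h1
    rw [e2] at h2
    have e3 : PS n = ∑ jj : Fin n, v jj := by
      rw [hPS]
      exact Finset.sum_congr rfl (fun jj _ => if_pos jj.2)
    rw [e3]
    linarith
  have hPS0 : PS 0 = 0 := by
    rw [hPS]
    exact Finset.sum_eq_zero (fun jj _ => by simp)
  have hsum_eq : ∀ (f : Fin n → ℝ) (m : ℕ) (hm : m < n),
      (∑ jj : Fin n, if (jj:ℕ) = m then f jj else 0) = f ⟨m, hm⟩ := by
    intro f m hm
    have hiff : ∀ jj : Fin n, ((jj:ℕ) = m) ↔ (jj = ⟨m, hm⟩) := fun jj => by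
      rw [Fin.ext_iff]
    simp only [hiff]
    simp [Finset.sum_ite_eq']
  have hPSstep : ∀ m : ℕ, (hm : m < n) → PS (m+1) = PS m + v ⟨m, hm⟩ := by
    intro m hm
    simp only [hPS]
    have e : ∀ jj : Fin n, (if (jj:ℕ) < m + 1 then v jj else 0)
        = (if (jj:ℕ) < m then v jj else 0) + (if (jj:ℕ) = m then v jj else 0) := by
      intro jj
      by_cases h1 : (jj:ℕ) < m
      · rw [if_pos h1, if_pos (by omega), if_neg (by omega), add_zero]
      · by_cases h2 : (jj:ℕ) = m
        · rw [if_pos (by omega), if_neg h1, if_pos h2, zero_add]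
        · rw [if_neg (by omega), if_neg h1, if_neg h2, add_zero]
    rw [Finset.sum_congr rfl (fun jj _ => e jj), Finset.sum_add_distrib, hsum_eq v m hm]
  refine ⟨fun a b => if (b:ℕ) = (a:ℕ)+1 then PS ((a:ℕ)+1) else 0, ?_, ?_⟩
  · intro a b
    dsimp only
    split
    · exact hPSnonneg _
    · exact le_rfl
  intro jj
  set C : Fin n → Fin n → ℝ := fun a b => if (b:ℕ) = (a:ℕ)+1 then PS ((a:ℕ)+1) else 0 with hC
  have hstrip : ∀ a b : Fin n, (if a < b then C a b else 0) = C a b := by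
    intro a b
    by_cases hab : a < b
    · rw [if_pos hab]
    · rw [if_neg hab, hC]
      dsimp only
      rw [if_neg]
      intro h
      exact hab (Fin.lt_def.mpr (by omega))
  have hgoal : P ((i:ℕ)+1) (abar (w i)) jj - eta jj = v jj := rfl
  rw [hgoal]
  rw [Finset.sum_congr rfl (fun a _ => Finset.sum_congr rfl (fun b _ => by rw [hstrip a b]))]
  have hsplit : (∑ a : Fin n, ∑ b : Fin n,
      C a b * ((if jj = a then (1:ℝ) else 0) - (if jj = b then 1 else 0)))
      = (∑ b : Fin n, C jj b) - (∑ a : Fin n, C a jj) := by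
    simp only [mul_sub, mul_ite, mul_one, mul_zero, Finset.sum_sub_distrib,
      Finset.sum_ite_irrel, Finset.sum_ite_eq, Finset.mem_univ, if_true, Finset.sum_const_zero]
  rw [hsplit]
  have hB1 : (∑ b : Fin n, C jj b) = if h : (jj:ℕ)+1 < n then PS ((jj:ℕ)+1) else 0 := by
    simp only [hC]
    split_ifs with h
    · exact hsum_eq (fun _ => PS ((jj:ℕ)+1)) ((jj:ℕ)+1) h
    · refine Finset.sum_eq_zero (fun b _ => if_neg ?_)
      have := b.2
      omega
  have hB2 : (∑ a : Fin n, C a jj) = if 1 ≤ (jj:ℕ) then PS (jj:ℕ) else 0 := by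
    simp only [hC]
    split_ifs with h
    · have e : ∀ a : Fin n, (if (jj:ℕ) = (a:ℕ)+1 then PS ((a:ℕ)+1) else 0)
          = (if (a:ℕ) = (jj:ℕ)-1 then PS (jj:ℕ) else 0) := by
        intro a
        by_cases h2 : (jj:ℕ) = (a:ℕ)+1
        · rw [if_pos h2, if_pos (by omega)]
          congr 1
          omega
        · rw [if_neg h2, if_neg (by omega)]
      rw [Finset.sum_congr rfl (fun a _ => e a), hsum_eq _ _ (by omega : (jj:ℕ)-1 < n)]
    · refine Finset.sum_eq_zero (fun a _ => if_neg (by omega))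
  rw [hB1, hB2]
  by_cases h0 : (jj:ℕ) = 0
  · rw [dif_pos (by omega), if_neg (by omega), sub_zero]
    have hstep := hPSstep 0 (by omega)
    rw [hPS0, zero_add] at hstep
    rw [show jj = ⟨0, by omega⟩ from Fin.ext h0]
    simpa using hstep.symm
  · by_cases h1 : (jj:ℕ)+1 < n
    · rw [dif_pos h1, if_pos (by omega)]
      have hstep := hPSstep (jj:ℕ) jj.2
      rw [Fin.eta] at hstep
      rw [hstep]
      ring
    · rw [dif_neg h1, if_pos (by omega)]
      have hstep := hPSstep (jj:ℕ) jj.2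
      rw [Fin.eta] at hstep
      have h3 : (jj:ℕ)+1 = n := by
        have := jj.2
        omega
      rw [h3, hPSn] at hstep
      linarith
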